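/- Let ω be a weight on (0,1] with ∫₀¹ r·ω(1-r) dr < ∞. Let γ be holomorphic on a neighborhood of {ζ ∈ ℂ : |ζ| ≥ 1} with Laurent coefficients c_j (j ∈ ℤ) on the unit circle, and let h(z) = Σ_{k=0}^N a_k z^k be a polynomial. Then −(1/(2πi)) ∮_{|ξ|=1} γ(ξ) h(ξ) dξ = −Σ_{k=0}^N c_{−(k+1)} a_k, and |−(1/(2πi)) ∮_{|ξ|=1} γ(ξ) h(ξ) dξ| ≤ (1/π) ρ(γ) ‖h‖_{B₂(𝔻,ω)}, where ρ(γ) = (π Σ_{k≥1} |c_{−k}|²/ω_{k-1})^{1/2}. -/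

import Mathlib

open MeasureTheory Set

/-- `ωₖ = 2∫₀¹ r^{2k+1} ω(1-r) dr`. -/
noncomputable def wk (ω : ℝ → ℝ) (k : ℕ) : ℝ :=
  2 * ∫ r in Set.Ioo (0:ℝ) 1, r ^ (2 * k + 1) * ω (1 - r)

namespace Stmt5Aux

open Complex intervalIntegral Real

lemma abs_exp_theta (θ : ℝ) : ‖Complex.exp (θ * Complex.I)‖ = 1 := by
  rw [Complex.norm_exp]
  simp

lemma integral_exp_int (n : ℤ) :
    (∫ θ in (-Real.pi)..Real.pi, Complex.exp ((n:ℂ) * θ * Complex.I))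
      = if n = 0 then (2*Real.pi : ℂ) else 0 := by
  split_ifs with hn
  · subst hn
    simp only [Int.cast_zero, zero_mul, Complex.exp_zero]
    rw [intervalIntegral.integral_const, Complex.real_smul]
    push_cast
    ring
  · have hc : ((n:ℂ) * Complex.I) ≠ 0 := by
      simp [Complex.ext_iff, hn]
    have key := integral_exp_mul_complex (a := -Real.pi) (b := Real.pi) hc
    have h2 : ∀ θ:ℝ, (n:ℂ) * θ * Complex.I = (n:ℂ) * Complex.I * θ := by intro θ; ring
    simp only [h2]
    rw [key]
    have e1 : (n:ℂ) * Complex.I * (Real.pi:ℂ) = (n:ℤ) * ((Real.pi:ℂ) * Complex.I) := by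
      push_cast; ring
    have e2 : (n:ℂ) * Complex.I * ((-Real.pi:ℝ):ℂ) = (-n:ℤ) * ((Real.pi:ℂ) * Complex.I) := by
      push_cast; ring
    rw [e1, e2, Complex.exp_int_mul, Complex.exp_int_mul, Complex.exp_pi_mul_I]
    have : ((-1 : ℂ)) ^ (-n : ℤ) = ((-1:ℂ)) ^ n := by
      rw [zpow_neg, ← inv_zpow]
      norm_num
    rw [this, sub_self, zero_div]

set_option maxHeartbeats 1000000 in
lemma inner_theta (N : ℕ) (a : ℕ → ℂ) (r : ℝ) :
    ∫ θ in Ioo (-Real.pi) Real.pi,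
      (‖∑ k ∈ Finset.range (N+1), a k * ((r:ℂ) * Complex.exp (θ * Complex.I)) ^ k‖)^2
      = (∑ k ∈ Finset.range (N+1), (‖a k‖)^2 * r^(2*k)) * (2*Real.pi) := by
  set R := Finset.range (N+1) with hR
  set z : ℝ → ℂ := fun θ => (r:ℂ) * Complex.exp (θ * Complex.I) with hz
  set T : ℕ → ℕ → ℝ → ℂ := fun j k θ => (a j * (starRingEnd ℂ) (a k) * (r:ℂ)^(j+k)) *
      Complex.exp (((((j:ℤ) - (k:ℤ) : ℤ)):ℂ) * θ * Complex.I) with hT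
  have habs : ∀ (w : ℂ), (‖w‖)^2 = (w * (starRingEnd ℂ) w).re := by
    intro w
    rw [Complex.mul_conj, Complex.ofReal_re, Complex.sq_norm]
  have expand : ∀ θ : ℝ,
      (∑ j ∈ R, a j * z θ ^ j) * (starRingEnd ℂ) (∑ k ∈ R, a k * z θ ^ k)
        = ∑ j ∈ R, ∑ k ∈ R, T j k θ := by
    intro θ
    rw [map_sum, Finset.sum_mul_sum]
    refine Finset.sum_congr rfl fun j _ => Finset.sum_congr rfl fun k _ => ?_
    have hconj : (starRingEnd ℂ) (z θ) = (r:ℂ) * Complex.exp (-(θ * Complex.I)) := by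
      rw [hz]
      simp only [map_mul, Complex.conj_ofReal, ← Complex.exp_conj]
      congr 1
      simp [Complex.ext_iff]
    rw [map_mul, map_pow, hconj, hz, hT]
    simp only [mul_pow, ← Complex.exp_nat_mul]
    rw [show a j * ((r:ℂ)^j * Complex.exp ((j:ℂ) * (θ * Complex.I))) *
          ((starRingEnd ℂ) (a k) * ((r:ℂ)^k * Complex.exp ((k:ℂ) * -(θ * Complex.I))))
        = (a j * (starRingEnd ℂ) (a k) * ((r:ℂ)^j * (r:ℂ)^k)) *
            (Complex.exp ((j:ℂ) * (θ * Complex.I)) * Complex.exp ((k:ℂ) * -(θ * Complex.I)))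
      from by ring, ← Complex.exp_add, ← pow_add]
    congr 1
    push_cast
    ring
  have hInt : ∀ (j k : ℕ), IntervalIntegrable (T j k) volume (-Real.pi) Real.pi := by
    intro j k
    apply Continuous.intervalIntegrable
    simp only [hT]
    fun_prop
  have hsumInt : ∀ j : ℕ, IntervalIntegrable (fun θ => ∑ k ∈ R, T j k θ)
      volume (-Real.pi) Real.pi := by
    intro j
    apply Continuous.intervalIntegrable
    refine continuous_finset_sum _ fun k _ => ?_
    simp only [hT]
    fun_prop
  have hterm : ∀ j, ∀ k ∈ R, (∫ θ in (-Real.pi)..Real.pi, T j k θ)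
      = if j = k then (a j * (starRingEnd ℂ) (a j) * (r:ℂ)^(j+j)) * (2*Real.pi:ℝ) else 0 := by
    intro j k _
    rw [hT]
    simp only
    rw [intervalIntegral.integral_const_mul, integral_exp_int ((j:ℤ) - (k:ℤ))]
    by_cases hjk : j = k
    · subst hjk
      simp
    · rw [if_neg (by omega), if_neg hjk, mul_zero]
  have hdiag : ∀ j ∈ R, ((if j ∈ R then (a j * (starRingEnd ℂ) (a j) * (r:ℂ)^(j+j)) * (2*Real.pi:ℝ) else 0))
      = ((‖a j‖)^2 * r^(2*j) * (2*Real.pi) : ℝ) := by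
    intro j hj
    rw [if_pos hj, Complex.mul_conj, Complex.normSq_eq_norm_sq,
      show j + j = 2 * j from (two_mul j).symm]
    push_cast
    try ring
  have hK : (∫ θ in (-Real.pi)..Real.pi,
        (∑ j ∈ R, a j * z θ ^ j) * (starRingEnd ℂ) (∑ k ∈ R, a k * z θ ^ k))
      = ((∑ k ∈ R, (‖a k‖)^2 * r^(2*k)) * (2*Real.pi) : ℝ) := by
    calc (∫ θ in (-Real.pi)..Real.pi,
          (∑ j ∈ R, a j * z θ ^ j) * (starRingEnd ℂ) (∑ k ∈ R, a k * z θ ^ k))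
        = ∫ θ in (-Real.pi)..Real.pi, ∑ j ∈ R, ∑ k ∈ R, T j k θ :=
          intervalIntegral.integral_congr fun θ _ => expand θ
      _ = ∑ j ∈ R, ∫ θ in (-Real.pi)..Real.pi, ∑ k ∈ R, T j k θ :=
          intervalIntegral.integral_finset_sum (fun j _ => hsumInt j)
      _ = ∑ j ∈ R, ∑ k ∈ R, ∫ θ in (-Real.pi)..Real.pi, T j k θ :=
          Finset.sum_congr rfl fun j _ =>
            intervalIntegral.integral_finset_sum (fun k _ => hInt j k)
      _ = ∑ j ∈ R, if j ∈ R then (a j * (starRingEnd ℂ) (a j) * (r:ℂ)^(j+j)) * (2*Real.pi:ℝ) else 0 := by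
          refine Finset.sum_congr rfl fun j hj => ?_
          rw [Finset.sum_congr rfl (hterm j), Finset.sum_ite_eq R j
            (fun _ => (a j * (starRingEnd ℂ) (a j) * (r:ℂ)^(j+j)) * (2*Real.pi:ℝ))]
      _ = ∑ j ∈ R, (((‖a j‖)^2 * r^(2*j) * (2*Real.pi) : ℝ) : ℂ) :=
          Finset.sum_congr rfl hdiag
      _ = ((∑ k ∈ R, (‖a k‖)^2 * r^(2*k)) * (2*Real.pi) : ℝ) := by
          push_cast
          rw [← Finset.sum_mul]
  have hcont1 : Continuous fun θ : ℝ => ∑ j ∈ R, a j * z θ ^ j := by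
    rw [hz]; fun_prop
  have hIcont : IntervalIntegrable
      (fun θ : ℝ => (∑ j ∈ R, a j * z θ ^ j) * (starRingEnd ℂ) (∑ k ∈ R, a k * z θ ^ k))
      volume (-Real.pi) Real.pi :=
    (hcont1.mul ((Complex.continuous_conj).comp hcont1)).intervalIntegrable _ _
  have hre := Complex.reCLM.intervalIntegral_comp_comm hIcont
  rw [← MeasureTheory.integral_Ioc_eq_integral_Ioo,
      ← intervalIntegral.integral_of_le (by linarith [Real.pi_pos] : -Real.pi ≤ Real.pi)]
  calc ∫ θ in (-Real.pi)..Real.pi,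
        (‖∑ k ∈ R, a k * z θ ^ k‖)^2
      = ∫ θ in (-Real.pi)..Real.pi, Complex.reCLM
          ((∑ j ∈ R, a j * z θ ^ j) * (starRingEnd ℂ) (∑ k ∈ R, a k * z θ ^ k)) := by
        refine intervalIntegral.integral_congr fun θ _ => ?_
        exact habs _
    _ = Complex.reCLM (∫ θ in (-Real.pi)..Real.pi,
          (∑ j ∈ R, a j * z θ ^ j) * (starRingEnd ℂ) (∑ k ∈ R, a k * z θ ^ k)) := hre
    _ = _ := by rw [hK, Complex.reCLM_apply, Complex.ofReal_re]


lemma circle_unfold (f : ℂ → ℂ) :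
    (∮ ξ in C(0,1), f ξ) = ∫ θ in (0:ℝ)..(2*Real.pi),
      (Complex.exp (θ * Complex.I) * Complex.I) * f (Complex.exp (θ * Complex.I)) := by
  simp only [circleIntegral, deriv_circleMap, circleMap, Complex.ofReal_one, zero_add, one_mul,
    smul_eq_mul]

lemma circle_pow (U : Set ℂ) (hUnbhd : {ζ : ℂ | 1 ≤ ‖ζ‖} ⊆ U)
    (γ : ℂ → ℂ) (hγ : DifferentiableOn ℂ γ U)
    (c : ℤ → ℂ)
    (hc : ∀ j : ℤ, c j = (1 / (2 * Real.pi) : ℂ) *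
      ∫ θ in (0:ℝ)..(2 * Real.pi),
        γ (Complex.exp (θ * Complex.I)) * Complex.exp (-(j : ℂ) * θ * Complex.I))
    (k : ℕ) :
    (∮ ξ in C(0,1), γ ξ * ξ^k) = (2*Real.pi*Complex.I) * c (-(k+1:ℤ)) := by
  rw [circle_unfold]
  have heq : ∀ θ:ℝ, (Complex.exp (θ*Complex.I) * Complex.I) *
      (γ (Complex.exp (θ*Complex.I)) * (Complex.exp (θ*Complex.I))^k)
      = Complex.I * (γ (Complex.exp (θ*Complex.I)) *
          Complex.exp (-(((-(k+1:ℤ)):ℤ):ℂ) * θ * Complex.I)) := by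
    intro θ
    rw [show (Complex.exp (θ*Complex.I))^k = Complex.exp ((k:ℂ)*(θ*Complex.I)) from
      (Complex.exp_nat_mul _ k).symm]
    rw [show Complex.exp (θ*Complex.I) * Complex.I *
          (γ (Complex.exp (θ*Complex.I)) * Complex.exp ((k:ℂ)*(θ*Complex.I)))
        = Complex.I * (γ (Complex.exp (θ*Complex.I)) *
            (Complex.exp (θ*Complex.I) * Complex.exp ((k:ℂ)*(θ*Complex.I)))) from by ring,
      ← Complex.exp_add]
    congr 2
    push_cast
    ring
  rw [intervalIntegral.integral_congr (fun θ _ => heq θ),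
    intervalIntegral.integral_const_mul, hc (-(k+1:ℤ))]
  have hπ : ((Real.pi:ℂ)) ≠ 0 := by
    simp [Real.pi_ne_zero]
  rw [← mul_assoc]
  congr 1
  field_simp

lemma part1 (U : Set ℂ) (hU : IsOpen U) (hUnbhd : {ζ : ℂ | 1 ≤ ‖ζ‖} ⊆ U)
    (γ : ℂ → ℂ) (hγ : DifferentiableOn ℂ γ U)
    (c : ℤ → ℂ)
    (hc : ∀ j : ℤ, c j = (1 / (2 * Real.pi) : ℂ) *
      ∫ θ in (0:ℝ)..(2 * Real.pi),
        γ (Complex.exp (θ * Complex.I)) * Complex.exp (-(j : ℂ) * θ * Complex.I))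
    (N : ℕ) (a : ℕ → ℂ) (h : ℂ → ℂ)
    (hh : ∀ z : ℂ, h z = ∑ k ∈ Finset.range (N + 1), a k * z ^ k) :
    (∮ ξ in C(0,1), γ ξ * h ξ)
      = (2*Real.pi*Complex.I) * ∑ k ∈ Finset.range (N+1), c (-(k+1:ℤ)) * a k := by
  have hγc : Continuous fun θ : ℝ => γ (Complex.exp (θ * Complex.I)) :=
    hγ.continuousOn.comp_continuous (by fun_prop)
      (fun θ => hUnbhd (by simp [abs_exp_theta]))
  have hg : ∀ k : ℕ, IntervalIntegrable (fun θ : ℝ =>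
      a k * ((Complex.exp (θ*Complex.I) * Complex.I) *
        (γ (Complex.exp (θ*Complex.I)) * (Complex.exp (θ*Complex.I))^k)))
      volume 0 (2*Real.pi) := by
    intro k
    apply Continuous.intervalIntegrable
    apply continuous_const.mul
    apply Continuous.mul
    · fun_prop
    · exact hγc.mul (by fun_prop)
  calc (∮ ξ in C(0,1), γ ξ * h ξ)
      = ∫ θ in (0:ℝ)..(2*Real.pi), ∑ k ∈ Finset.range (N+1),
          a k * ((Complex.exp (θ*Complex.I) * Complex.I) *
            (γ (Complex.exp (θ*Complex.I)) * (Complex.exp (θ*Complex.I))^k)) := by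
        rw [circle_unfold]
        refine intervalIntegral.integral_congr fun θ _ => ?_
        rw [hh, Finset.mul_sum, Finset.mul_sum]
        refine Finset.sum_congr rfl fun k _ => by ring
    _ = ∑ k ∈ Finset.range (N+1), a k * ∫ θ in (0:ℝ)..(2*Real.pi),
          ((Complex.exp (θ*Complex.I) * Complex.I) *
            (γ (Complex.exp (θ*Complex.I)) * (Complex.exp (θ*Complex.I))^k)) := by
        rw [intervalIntegral.integral_finset_sum (fun k _ => hg k)]
        exact Finset.sum_congr rfl fun k _ => intervalIntegral.integral_const_mul _ _
    _ = ∑ k ∈ Finset.range (N+1), a k * ((2*Real.pi*Complex.I) * c (-(k+1:ℤ))) := by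
        refine Finset.sum_congr rfl fun k _ => ?_
        rw [← circle_pow U hUnbhd γ hγ c hc k, circle_unfold]
    _ = (2*Real.pi*Complex.I) * ∑ k ∈ Finset.range (N+1), c (-(k+1:ℤ)) * a k := by
        rw [Finset.mul_sum]
        exact Finset.sum_congr rfl fun k _ => by ring

lemma intk (ω : ℝ → ℝ) (hmeas : Measurable ω) (hpos : ∀ t ∈ Set.Ioc (0:ℝ) 1, 0 < ω t)
    (hint : ∫⁻ r in Set.Ioo (0:ℝ) 1, ENNReal.ofReal (r * ω (1 - r)) < ⊤) (k : ℕ) :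
    IntegrableOn (fun r : ℝ => r ^ (2*k+1) * ω (1 - r)) (Ioo (0:ℝ) 1) := by
  have hωnn : ∀ r ∈ Ioo (0:ℝ) 1, 0 ≤ ω (1 - r) := fun r hr =>
    (hpos _ ⟨by linarith [hr.2], by linarith [hr.1]⟩).le
  refine ⟨((measurable_id.pow_const _).mul
    (hmeas.comp (measurable_const.sub measurable_id))).aestronglyMeasurable, ?_⟩
  rw [hasFiniteIntegral_iff_ofReal ?hnn]
  case hnn =>
    filter_upwards [ae_restrict_mem measurableSet_Ioo] with r hr
    exact mul_nonneg (pow_nonneg hr.1.le _) (hωnn r hr)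
  refine lt_of_le_of_lt ?_ hint
  refine lintegral_mono_ae ?_
  filter_upwards [ae_restrict_mem measurableSet_Ioo] with r hr
  refine ENNReal.ofReal_le_ofReal (mul_le_mul_of_nonneg_right ?_ (hωnn r hr))
  calc r ^ (2*k+1) ≤ r ^ 1 := pow_le_pow_of_le_one hr.1.le hr.2.le (by omega)
    _ = r := pow_one r

lemma intk0 (ω : ℝ → ℝ) (hmeas : Measurable ω) (hpos : ∀ t ∈ Set.Ioc (0:ℝ) 1, 0 < ω t)
    (hint : ∫⁻ r in Set.Ioo (0:ℝ) 1, ENNReal.ofReal (r * ω (1 - r)) < ⊤) :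
    IntegrableOn (fun r : ℝ => r * ω (1 - r)) (Ioo (0:ℝ) 1) := by
  have := intk ω hmeas hpos hint 0
  simpa using this

lemma intOmega (ω : ℝ → ℝ) (hmeas : Measurable ω) (hpos : ∀ t ∈ Set.Ioc (0:ℝ) 1, 0 < ω t)
    (hint : ∫⁻ r in Set.Ioo (0:ℝ) 1, ENNReal.ofReal (r * ω (1 - r)) < ⊤)
    (t : ℝ) (ht : t ∈ Ioo (0:ℝ) 1) :
    IntegrableOn (fun r : ℝ => ω (1 - r)) (Ioo t 1) := by
  have hsub : Ioo t 1 ⊆ Ioo (0:ℝ) 1 := Ioo_subset_Ioo ht.1.le le_rfl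
  have hbig : IntegrableOn (fun r : ℝ => (1/t) * (r * ω (1 - r))) (Ioo t 1) :=
    ((intk0 ω hmeas hpos hint).mono_set hsub).const_mul _
  refine Integrable.mono hbig
    ((hmeas.comp (measurable_const.sub measurable_id)).aestronglyMeasurable) ?_
  filter_upwards [ae_restrict_mem measurableSet_Ioo] with r hr
  have hr0 : (0:ℝ) < r := lt_trans ht.1 hr.1
  have hωnn : 0 ≤ ω (1 - r) := (hpos _ ⟨by linarith [hr.2], by linarith [hr0]⟩).le
  rw [Real.norm_eq_abs, Real.norm_eq_abs, _root_.abs_of_nonneg hωnn,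
    _root_.abs_of_nonneg (mul_nonneg (one_div_pos.mpr ht.1).le (mul_nonneg hr0.le hωnn))]
  rw [show (1/t) * (r * ω (1-r)) = (r/t) * ω (1-r) from by ring]
  nth_rewrite 1 [show ω (1-r) = 1 * ω (1-r) from (one_mul _).symm]
  apply mul_le_mul_of_nonneg_right _ hωnn
  rw [le_div_iff₀ ht.1, one_mul]
  exact hr.1.le

lemma Jpos (ω : ℝ → ℝ) (hmeas : Measurable ω) (hpos : ∀ t ∈ Set.Ioc (0:ℝ) 1, 0 < ω t)
    (hint : ∫⁻ r in Set.Ioo (0:ℝ) 1, ENNReal.ofReal (r * ω (1 - r)) < ⊤)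
    (t : ℝ) (ht : t ∈ Ioo (0:ℝ) 1) :
    0 < ∫ r in Ioo t 1, ω (1 - r) := by
  have hnn : 0 ≤ᵐ[volume.restrict (Ioo t 1)] fun r => ω (1 - r) := by
    filter_upwards [ae_restrict_mem measurableSet_Ioo] with r hr
    exact (hpos _ ⟨by linarith [hr.2], by linarith [ht.1, hr.1]⟩).le
  rw [setIntegral_pos_iff_support_of_nonneg_ae hnn (intOmega ω hmeas hpos hint t ht)]
  refine lt_of_lt_of_le ?_ (measure_mono (fun r hr =>
    ⟨(hpos _ ⟨by linarith [hr.2], by linarith [ht.1, hr.1]⟩).ne', hr⟩))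
  rw [Real.volume_Ioo]
  rw [ENNReal.ofReal_pos]
  linarith [ht.2]

lemma wk_lower (ω : ℝ → ℝ) (hmeas : Measurable ω) (hpos : ∀ t ∈ Set.Ioc (0:ℝ) 1, 0 < ω t)
    (hint : ∫⁻ r in Set.Ioo (0:ℝ) 1, ENNReal.ofReal (r * ω (1 - r)) < ⊤)
    (t : ℝ) (ht : t ∈ Ioo (0:ℝ) 1) (k : ℕ) :
    t^(2*k+1) * (2 * ∫ r in Ioo t 1, ω (1 - r)) ≤ wk ω k := by
  have hsub : Ioo t 1 ⊆ Ioo (0:ℝ) 1 := Ioo_subset_Ioo ht.1.le le_rfl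
  have h1 : ∫ r in Ioo t 1, t^(2*k+1) * ω (1 - r) ≤ ∫ r in Ioo t 1, r^(2*k+1) * ω (1 - r) := by
    refine setIntegral_mono_on ((intOmega ω hmeas hpos hint t ht).const_mul _)
      ((intk ω hmeas hpos hint k).mono_set hsub) measurableSet_Ioo ?_
    intro r hr
    have hωnn : 0 ≤ ω (1 - r) := (hpos _ ⟨by linarith [hr.2], by linarith [ht.1, hr.1]⟩).le
    exact mul_le_mul_of_nonneg_right (pow_le_pow_left₀ ht.1.le hr.1.le _) hωnn
  have h2 : ∫ r in Ioo t 1, r^(2*k+1) * ω (1 - r) ≤ ∫ r in Ioo (0:ℝ) 1, r^(2*k+1) * ω (1 - r) := by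
    refine setIntegral_mono_set (intk ω hmeas hpos hint k) ?_ (HasSubset.Subset.eventuallyLE hsub)
    filter_upwards [ae_restrict_mem measurableSet_Ioo] with r hr
    exact mul_nonneg (pow_nonneg hr.1.le _)
      (hpos _ ⟨by linarith [hr.2], by linarith [hr.1]⟩).le
  rw [wk]
  rw [MeasureTheory.integral_const_mul] at h1
  nlinarith [h1, h2]

lemma wk_pos (ω : ℝ → ℝ) (hmeas : Measurable ω) (hpos : ∀ t ∈ Set.Ioc (0:ℝ) 1, 0 < ω t)
    (hint : ∫⁻ r in Set.Ioo (0:ℝ) 1, ENNReal.ofReal (r * ω (1 - r)) < ⊤) (k : ℕ) :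
    0 < wk ω k := by
  have ht : (1/2 : ℝ) ∈ Ioo (0:ℝ) 1 := by norm_num
  refine lt_of_lt_of_le ?_ (wk_lower ω hmeas hpos hint (1/2) ht k)
  have := Jpos ω hmeas hpos hint (1/2) ht
  positivity

lemma ball_integral (ω : ℝ → ℝ) (hmeas : Measurable ω) (hpos : ∀ t ∈ Set.Ioc (0:ℝ) 1, 0 < ω t)
    (hint : ∫⁻ r in Set.Ioo (0:ℝ) 1, ENNReal.ofReal (r * ω (1 - r)) < ⊤)
    (N : ℕ) (a : ℕ → ℂ) (h : ℂ → ℂ)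
    (hh : ∀ z : ℂ, h z = ∑ k ∈ Finset.range (N + 1), a k * z ^ k) :
    ∫ z in Metric.ball (0:ℂ) 1, (‖h z‖)^2 * ω (1 - ‖z‖)
      = Real.pi * ∑ k ∈ Finset.range (N+1), (‖a k‖)^2 * wk ω k := by
  have hωnn : ∀ r ∈ Ioo (0:ℝ) 1, 0 ≤ ω (1 - r) := fun r hr =>
    (hpos _ ⟨by linarith [hr.2], by linarith [hr.1]⟩).le
  set F : ℂ → ℝ := fun z => (‖h z‖)^2 * ω (1 - ‖z‖) with hF
  have hcont : Continuous h := by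
    rw [show h = fun z => ∑ k ∈ Finset.range (N+1), a k * z^k from funext hh]
    fun_prop
  obtain ⟨C, hC⟩ : ∃ C, ∀ z ∈ Metric.closedBall (0:ℂ) 1, ‖h z‖ ≤ C :=
    (isCompact_closedBall _ _).exists_bound_of_continuousOn hcont.continuousOn
  have hFmeas : Measurable F := by
    have h1 : Continuous fun z : ℂ => (‖h z‖)^2 := by
      fun_prop
    have h2 : Continuous fun z : ℂ => 1 - ‖z‖ := by
      fun_prop
    exact h1.measurable.mul (hmeas.comp h2.measurable)
  have hsymm : ∀ p : ℝ × ℝ, Complex.polarCoord.symm p = (p.1 : ℂ) * Complex.exp (p.2 * Complex.I) := by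
    intro p
    rw [Complex.polarCoord_symm_apply, Complex.exp_mul_I]
    push_cast
    ring
  set S : Set (ℝ × ℝ) := Ioo (0:ℝ) 1 ×ˢ Ioo (-Real.pi) Real.pi with hS
  set G : ℝ × ℝ → ℝ := fun p => p.1 * F ((p.1:ℂ) * Complex.exp (p.2 * Complex.I)) with hG
  have hSmeas : MeasurableSet S := measurableSet_Ioo.prod measurableSet_Ioo
  have e1 : ∀ p ∈ Ioi (0:ℝ) ×ˢ Ioo (-Real.pi) Real.pi,
      p.1 • (Metric.ball (0:ℂ) 1).indicator F (Complex.polarCoord.symm p)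
        = S.indicator G p := by
    rintro ⟨r, θ⟩ ⟨hr, hθ⟩
    simp only [smul_eq_mul]
    have habs : ‖Complex.polarCoord.symm (r, θ)‖ = r := by
      rw [Complex.norm_polarCoord_symm]
      exact abs_of_pos hr
    by_cases h1 : r < 1
    · rw [indicator_of_mem (by rw [mem_ball_zero_iff, habs]; exact h1),
        indicator_of_mem (by exact ⟨⟨hr, h1⟩, hθ⟩), hG, hsymm]
    · rw [indicator_of_notMem (by rw [mem_ball_zero_iff, habs]; exact h1),
        indicator_of_notMem (by rintro ⟨⟨_, hlt⟩, _⟩; exact h1 hlt), mul_zero]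
  have step1 : ∫ z in Metric.ball (0:ℂ) 1, F z = ∫ p in S, G p := by
    calc ∫ z in Metric.ball (0:ℂ) 1, F z
        = ∫ z, (Metric.ball (0:ℂ) 1).indicator F z := (MeasureTheory.integral_indicator measurableSet_ball).symm
      _ = ∫ p in polarCoord.target, p.1 • (Metric.ball (0:ℂ) 1).indicator F (Complex.polarCoord.symm p) :=
          (Complex.integral_comp_polarCoord_symm _).symm
      _ = ∫ p in Ioi (0:ℝ) ×ˢ Ioo (-Real.pi) Real.pi, S.indicator G p := by
          rw [polarCoord_target]
          exact setIntegral_congr_fun (measurableSet_Ioi.prod measurableSet_Ioo) e1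
      _ = ∫ p in (Ioi (0:ℝ) ×ˢ Ioo (-Real.pi) Real.pi) ∩ S, G p := setIntegral_indicator hSmeas
      _ = ∫ p in S, G p := by
          rw [inter_eq_self_of_subset_right
            (prod_mono_left Ioo_subset_Ioi_self)]
  have hGmeas : Measurable G := by
    apply Measurable.mul
    · fun_prop
    · exact hFmeas.comp (by fun_prop : Continuous fun p : ℝ × ℝ => (p.1:ℂ) * Complex.exp (p.2 * Complex.I)).measurable
  have hGint : Integrable G ((volume.restrict (Ioo (0:ℝ) 1)).prod
      (volume.restrict (Ioo (-Real.pi) Real.pi))) := by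
    have hDint : Integrable (fun p : ℝ × ℝ => ((C^2) * (p.1 * ω (1 - p.1))) * (1:ℝ))
        ((volume.restrict (Ioo (0:ℝ) 1)).prod (volume.restrict (Ioo (-Real.pi) Real.pi))) := by
      refine Integrable.mul_prod (f := fun r => (C^2) * (r * ω (1 - r))) (g := fun _ => (1:ℝ))
        ((intk0 ω hmeas hpos hint).const_mul _) ?_
      rw [← IntegrableOn]
      rw [integrableOn_const_iff]
      right
      rw [Real.volume_Ioo]
      exact ENNReal.ofReal_lt_top
    refine hDint.mono hGmeas.aestronglyMeasurable ?_
    rw [Measure.prod_restrict]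
    filter_upwards [ae_restrict_mem (measurableSet_Ioo.prod measurableSet_Ioo)] with p hp
    have hp1 : p.1 ∈ Ioo (0:ℝ) 1 := hp.1
    have hz : ‖(p.1:ℂ) * Complex.exp (p.2 * Complex.I)‖ = p.1 := by
      rw [norm_mul, abs_exp_theta, mul_one, Complex.norm_real, Real.norm_eq_abs, abs_of_pos hp1.1]
    have hzb : ((p.1:ℂ) * Complex.exp (p.2 * Complex.I)) ∈ Metric.closedBall (0:ℂ) 1 := by
      rw [Metric.mem_closedBall, dist_zero_right, hz]
      exact hp1.2.le
    have hhle : ‖h ((p.1:ℂ) * Complex.exp (p.2 * Complex.I))‖ ≤ C := by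
      exact hC _ hzb
    have hw : 0 ≤ ω (1 - p.1) := hωnn p.1 hp1
    have hGnn : 0 ≤ G p := by
      simp only [hG, hF, hz]
      exact mul_nonneg hp1.1.le (mul_nonneg (sq_nonneg _) hw)
    have h2 : (‖h ((p.1:ℂ) * Complex.exp (p.2 * Complex.I))‖)^2 ≤ C^2 := by
      apply sq_le_sq'
      · nlinarith [norm_nonneg (h ((p.1:ℂ) * Complex.exp (p.2 * Complex.I)))]
      · exact hhle
    rw [Real.norm_eq_abs, Real.norm_eq_abs, _root_.abs_of_nonneg hGnn,
      _root_.abs_of_nonneg (mul_nonneg (mul_nonneg (sq_nonneg C)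
        (mul_nonneg hp1.1.le hw)) zero_le_one)]
    simp only [hG, hF, hz]
    nlinarith [mul_nonneg (mul_nonneg (sub_nonneg.mpr h2) hp1.1.le) hw]
  have step2 : ∫ p in S, G p = ∫ r in Ioo (0:ℝ) 1, ∫ θ in Ioo (-Real.pi) Real.pi, G (r, θ) := by
    rw [hS, Measure.volume_eq_prod, ← Measure.prod_restrict]
    exact integral_prod _ hGint
  have step3 : ∀ r ∈ Ioo (0:ℝ) 1, (∫ θ in Ioo (-Real.pi) Real.pi, G (r, θ))
      = ∑ k ∈ Finset.range (N+1), (2*Real.pi*(‖a k‖)^2) * (r^(2*k+1) * ω (1-r)) := by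
    intro r hr
    have hz : ∀ θ : ℝ, ‖(r:ℂ) * Complex.exp (θ * Complex.I)‖ = r := by
      intro θ
      rw [norm_mul, abs_exp_theta, mul_one, Complex.norm_real, Real.norm_eq_abs, abs_of_pos hr.1]
    have e2 : ∀ θ : ℝ, G (r, θ) = (r * ω (1-r)) *
        (‖∑ k ∈ Finset.range (N+1), a k * ((r:ℂ) * Complex.exp (θ * Complex.I))^k‖)^2 := by
      intro θ
      simp only [hG, hF, hz θ, hh]
      ring
    rw [setIntegral_congr_fun measurableSet_Ioo (fun θ _ => e2 θ),
      MeasureTheory.integral_const_mul, inner_theta N a r, Finset.sum_mul, Finset.mul_sum]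
    refine Finset.sum_congr rfl fun k _ => ?_
    ring
  have step4 : ∫ r in Ioo (0:ℝ) 1, ∫ θ in Ioo (-Real.pi) Real.pi, G (r, θ)
      = ∑ k ∈ Finset.range (N+1), (2*Real.pi*(‖a k‖)^2) *
          ∫ r in Ioo (0:ℝ) 1, r^(2*k+1) * ω (1-r) := by
    rw [setIntegral_congr_fun measurableSet_Ioo step3]
    rw [integral_finset_sum _ (fun k _ => ((intk ω hmeas hpos hint k).const_mul _))]
    exact Finset.sum_congr rfl fun k _ => MeasureTheory.integral_const_mul _ _
  rw [step1, step2, step4, Finset.mul_sum]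
  refine Finset.sum_congr rfl fun k _ => ?_
  rw [wk]
  ring

end Stmt5Aux

/-- let `γ` be holomorphic on a neighborhood of `{ |ζ| ≥ 1 }`
with Laurent coefficients `c_j = (1/2π) ∫₀^{2π} γ(e^{iθ}) e^{-ijθ} dθ`, and
let `h(z) = Σ_{k=0}^N aₖ zᵏ` be a polynomial. Then
`-(1/(2πi)) ∮_{|ξ|=1} γ(ξ)h(ξ) dξ = -Σ_{k=0}^N c_{-(k+1)} aₖ`, and this
quantity is bounded by `(1/π) ρ(γ) ‖h‖_{B₂(𝔻,ω)}`, where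
`ρ(γ) = (π Σ_{k≥1} |c_{-k}|²/ω_{k-1})^{1/2}`. -/
theorem cauchy_transform_stmt5
    (ω : ℝ → ℝ) (hmeas : Measurable ω) (hpos : ∀ t ∈ Set.Ioc (0:ℝ) 1, 0 < ω t)
    (hint : ∫⁻ r in Set.Ioo (0:ℝ) 1, ENNReal.ofReal (r * ω (1 - r)) < ⊤)
    (U : Set ℂ) (hU : IsOpen U) (hUnbhd : {ζ : ℂ | 1 ≤ ‖ζ‖} ⊆ U)
    (γ : ℂ → ℂ) (hγ : DifferentiableOn ℂ γ U)
    (c : ℤ → ℂ)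
    (hc : ∀ j : ℤ, c j = (1 / (2 * Real.pi) : ℂ) *
      ∫ θ in (0:ℝ)..(2 * Real.pi),
        γ (Complex.exp (θ * Complex.I)) * Complex.exp (-(j : ℂ) * θ * Complex.I))
    (N : ℕ) (a : ℕ → ℂ) (h : ℂ → ℂ)
    (hh : ∀ z : ℂ, h z = ∑ k ∈ Finset.range (N + 1), a k * z ^ k) :
    -((2 * (Real.pi : ℂ) * Complex.I)⁻¹ * ∮ ξ in C(0, 1), γ ξ * h ξ) =
        -∑ k ∈ Finset.range (N + 1), c (-(k + 1 : ℤ)) * a k ∧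
    ‖-((2 * (Real.pi : ℂ) * Complex.I)⁻¹ * ∮ ξ in C(0, 1), γ ξ * h ξ)‖ ≤
      (1 / Real.pi) *
        Real.sqrt (Real.pi * ∑' k : ℕ, ‖c (-(k + 1 : ℤ))‖ ^ 2 / wk ω k) *
        Real.sqrt (∫ z in Metric.ball (0:ℂ) 1,
          ‖h z‖ ^ 2 * ω (1 - ‖z‖)) := by
  have hπpos := Real.pi_pos
  have hπ : ((Real.pi:ℂ)) ≠ 0 := by simp [Real.pi_ne_zero]
  have hp1 := Stmt5Aux.part1 U hU hUnbhd γ hγ c hc N a h hh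
  have heq1 : -((2 * (Real.pi : ℂ) * Complex.I)⁻¹ * ∮ ξ in C(0, 1), γ ξ * h ξ) =
      -∑ k ∈ Finset.range (N + 1), c (-(k + 1 : ℤ)) * a k := by
    rw [hp1]
    have hI := Complex.I_ne_zero
    field_simp
  refine ⟨heq1, ?_⟩
  rw [heq1, norm_neg, Stmt5Aux.ball_integral ω hmeas hpos hint N a h hh]
  -- choose s with the closed exterior of the s-disk inside U
  obtain ⟨s, hs0, hs1, hKs⟩ : ∃ s : ℝ, 0 < s ∧ s < 1 ∧ ∀ z : ℂ, s ≤ ‖z‖ → z ∈ U := by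
    by_cases hK : (Uᶜ : Set ℂ).Nonempty
    · have hKc : IsCompact (Uᶜ : Set ℂ) := by
        apply Metric.isCompact_of_isClosed_isBounded hU.isClosed_compl
        refine Bornology.IsBounded.subset (Metric.isBounded_ball (x := (0:ℂ)) (r := 1)) ?_
        intro z hz
        rw [mem_ball_zero_iff]
        by_contra hlt
        exact hz (hUnbhd (by
          rw [mem_setOf_eq]
          linarith [not_lt.mp hlt]))
      obtain ⟨z0, hz0K, hmax⟩ := hKc.exists_isMaxOn hK continuous_norm.continuousOn
      have hz0lt : ‖z0‖ < 1 := by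
        by_contra hge
        exact hz0K (hUnbhd (not_lt.mp hge))
      have hz0nn : 0 ≤ ‖z0‖ := norm_nonneg _
      refine ⟨(‖z0‖ + 1)/2, by linarith, by linarith, ?_⟩
      intro z hz
      by_contra hzU
      have := hmax (hzU : z ∈ (Uᶜ : Set ℂ))
      have h2 : ‖z‖ ≤ ‖z0‖ := this
      linarith
    · have hUuniv : U = univ := compl_empty_iff.mp (not_nonempty_iff_eq_empty.mp hK)
      exact ⟨1/2, by norm_num, by norm_num, fun z _ => hUuniv ▸ mem_univ z⟩
  -- bound on γ on the sphere of radius s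
  obtain ⟨M, hM⟩ := (isCompact_sphere (0:ℂ) s).exists_bound_of_continuousOn
    (hγ.continuousOn.mono (fun z hz => hKs z (le_of_eq
      (by rw [mem_sphere_zero_iff_norm.mp hz]))))
  have hM0 : 0 ≤ M := by
    obtain ⟨z1, hz1⟩ : (Metric.sphere (0:ℂ) s).Nonempty := NormedSpace.sphere_nonempty.mpr hs0.le
    exact le_trans (norm_nonneg _) (hM z1 hz1)
  -- geometric bound on the Laurent coefficients
  have hcb : ∀ k : ℕ, ‖c (-(k+1:ℤ))‖ ≤ (M * s) * s^k := by
    intro k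
    have hann : (∮ ξ in C(0,1), γ ξ * ξ^k) = ∮ ξ in C(0,s), γ ξ * ξ^k := by
      apply Complex.circleIntegral_eq_of_differentiable_on_annulus_off_countable hs0 hs1.le
        Set.countable_empty
      · refine (hγ.continuousOn.mono ?_).mul (continuous_pow k).continuousOn
        rintro z ⟨_, hz2⟩
        apply hKs
        rw [Metric.mem_ball, dist_zero_right, not_lt] at hz2
        exact hz2
      · rintro z ⟨⟨_, hz2⟩, -⟩
        refine DifferentiableAt.mul ?_ (differentiableAt_pow k)
        refine hγ.differentiableAt (hU.mem_nhds (hKs z ?_))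
        rw [Metric.mem_closedBall, dist_zero_right, not_le] at hz2
        exact hz2.le
    have hbound : ‖∮ ξ in C(0,s), γ ξ * ξ^k‖ ≤ 2 * Real.pi * s * (M * s^k) := by
      apply circleIntegral.norm_integral_le_of_norm_le_const hs0.le
      intro z hz
      have hzs : ‖z‖ = s := mem_sphere_zero_iff_norm.mp hz
      rw [norm_mul, norm_pow, hzs]
      exact mul_le_mul_of_nonneg_right (hM z hz) (by positivity)
    have hcirc := Stmt5Aux.circle_pow U hUnbhd γ hγ c hc k
    have h5 : ‖2*(Real.pi:ℂ)*Complex.I‖ = 2 * Real.pi := by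
      rw [norm_mul, norm_mul, Complex.norm_two, Complex.norm_I, Complex.norm_real, Real.norm_eq_abs,
        _root_.abs_of_pos hπpos, mul_one]
    have h6 : 2*Real.pi * ‖c (-(k+1:ℤ))‖ ≤ 2 * Real.pi * (s * (M * s^k)) := by
      calc 2*Real.pi * ‖c (-(k+1:ℤ))‖
          = ‖(2*(Real.pi:ℂ)*Complex.I) * c (-(k+1:ℤ))‖ := by rw [norm_mul, h5]
        _ = ‖∮ ξ in C(0,s), γ ξ * ξ^k‖ := by
            rw [← hann, hcirc]
        _ ≤ 2 * Real.pi * s * (M * s^k) := hbound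
        _ = 2 * Real.pi * (s * (M * s^k)) := by ring
    have h7 := (mul_le_mul_iff_right₀ (by positivity : (0:ℝ) < 2*Real.pi)).mp h6
    calc ‖c (-(k+1:ℤ))‖ ≤ s * (M * s^k) := h7
      _ = (M * s) * s^k := by ring
  -- lower bound on wk
  obtain ⟨t, ht, hst⟩ : ∃ t : ℝ, t ∈ Ioo (0:ℝ) 1 ∧ s < t :=
    ⟨(s+1)/2, ⟨by linarith, by linarith⟩, by linarith⟩
  have hJ := Stmt5Aux.Jpos ω hmeas hpos hint t ht
  set J := ∫ r in Ioo t 1, ω (1-r) with hJdef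
  have hwk : ∀ k : ℕ, (2*t*J) * (t^2)^k ≤ wk ω k := fun k => by
    have h8 := Stmt5Aux.wk_lower ω hmeas hpos hint t ht k
    calc (2*t*J)*(t^2)^k = t^(2*k+1) * (2*J) := by ring
      _ ≤ wk ω k := h8
  have hwkpos : ∀ k : ℕ, 0 < wk ω k := Stmt5Aux.wk_pos ω hmeas hpos hint
  -- summability
  have hsummand : ∀ k : ℕ, ‖c (-(k+1:ℤ))‖^2 / wk ω k
      ≤ ((M*s)^2/(2*t*J)) * ((s^2/t^2))^k := by
    intro k
    have hnum : ‖c (-(k+1:ℤ))‖^2 ≤ (M*s)^2 * (s^2)^k := by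
      calc ‖c (-(k+1:ℤ))‖^2 ≤ ((M*s)*s^k)^2 :=
            pow_le_pow_left₀ (norm_nonneg _) (hcb k) 2
        _ = (M*s)^2 * (s^2)^k := by ring
    have hdenpos : 0 < (2*t*J) * (t^2)^k :=
      mul_pos (mul_pos (mul_pos two_pos ht.1) hJ) (pow_pos (pow_pos ht.1 2) k)
    calc ‖c (-(k+1:ℤ))‖^2 / wk ω k
        ≤ ((M*s)^2*(s^2)^k)/((2*t*J)*(t^2)^k) :=
          div_le_div₀ (by positivity) hnum hdenpos (hwk k)
      _ = ((M*s)^2/(2*t*J)) * ((s^2/t^2))^k := by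
          rw [← div_mul_div_comm, ← div_pow]
  have hratio0 : (0:ℝ) ≤ s^2/t^2 := by positivity
  have hratio1 : s^2/t^2 < 1 := by
    rw [div_lt_one (pow_pos ht.1 2)]
    nlinarith [hst, hs0]
  have hsummable : Summable (fun k : ℕ => ‖c (-(k+1:ℤ))‖^2 / wk ω k) := by
    apply Summable.of_nonneg_of_le (fun k => div_nonneg (sq_nonneg _) (hwkpos k).le) hsummand
    exact (summable_geometric_of_lt_one hratio0 hratio1).mul_left _
  -- Cauchy-Schwarz
  set f : ℕ → ℝ := fun k => ‖c (-(k+1:ℤ))‖ / Real.sqrt (wk ω k) with hfdef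
  set g : ℕ → ℝ := fun k => ‖a k‖ * Real.sqrt (wk ω k) with hgdef
  have hCS := Finset.sum_mul_sq_le_sq_mul_sq (Finset.range (N+1)) f g
  have hfg : ∀ k, f k * g k = ‖c (-(k+1:ℤ))‖ * ‖a k‖ := by
    intro k
    have hsqpos : (0:ℝ) < Real.sqrt (wk ω k) := Real.sqrt_pos.mpr (hwkpos k)
    rw [hfdef, hgdef]
    simp only
    field_simp
  have hf2 : ∀ k, f k ^ 2 = ‖c (-(k+1:ℤ))‖^2 / wk ω k := by
    intro k
    rw [hfdef]
    simp only
    rw [div_pow, Real.sq_sqrt (hwkpos k).le]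
  have hg2 : ∀ k, g k ^ 2 = ‖a k‖^2 * wk ω k := by
    intro k
    rw [hgdef]
    simp only
    rw [mul_pow, Real.sq_sqrt (hwkpos k).le]
  have habs : ‖∑ k ∈ Finset.range (N+1), c (-(k+1:ℤ)) * a k‖
      ≤ ∑ k ∈ Finset.range (N+1), f k * g k := by
    calc ‖∑ k ∈ Finset.range (N+1), c (-(k+1:ℤ)) * a k‖
        ≤ ∑ k ∈ Finset.range (N+1), ‖c (-(k+1:ℤ)) * a k‖ :=
          norm_sum_le _ _
      _ = ∑ k ∈ Finset.range (N+1), f k * g k :=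
          Finset.sum_congr rfl fun k _ => by rw [norm_mul, hfg k]
  have hsfg_nonneg : 0 ≤ ∑ k ∈ Finset.range (N+1), f k * g k :=
    Finset.sum_nonneg fun k _ => by
      rw [hfg k]
      exact mul_nonneg (norm_nonneg _) (norm_nonneg _)
  have hCS' : ∑ k ∈ Finset.range (N+1), f k * g k
      ≤ Real.sqrt (∑ k ∈ Finset.range (N+1), f k ^ 2) *
        Real.sqrt (∑ k ∈ Finset.range (N+1), g k ^ 2) := by
    rw [← Real.sqrt_mul (Finset.sum_nonneg fun k _ => sq_nonneg (f k))]
    rw [show (∑ k ∈ Finset.range (N+1), f k * g k)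
        = Real.sqrt ((∑ k ∈ Finset.range (N+1), f k * g k)^2) from
      (Real.sqrt_sq hsfg_nonneg).symm]
    exact Real.sqrt_le_sqrt hCS
  have hT : (∑ k ∈ Finset.range (N+1), f k ^ 2)
      ≤ ∑' k : ℕ, ‖c (-(k+1:ℤ))‖^2 / wk ω k := by
    rw [Finset.sum_congr rfl (fun k _ => hf2 k)]
    exact Summable.sum_le_tsum _ (fun k _ => div_nonneg (sq_nonneg _) (hwkpos k).le) hsummable
  have hTnn : 0 ≤ ∑' k : ℕ, ‖c (-(k+1:ℤ))‖^2 / wk ω k :=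
    tsum_nonneg fun k => div_nonneg (sq_nonneg _) (hwkpos k).le
  have hSfin_nn : 0 ≤ ∑ k ∈ Finset.range (N+1), ‖a k‖^2 * wk ω k :=
    Finset.sum_nonneg fun k _ => mul_nonneg (sq_nonneg _) (hwkpos k).le
  have hgS : (∑ k ∈ Finset.range (N+1), g k ^ 2)
      = ∑ k ∈ Finset.range (N+1), ‖a k‖^2 * wk ω k :=
    Finset.sum_congr rfl fun k _ => hg2 k
  calc ‖∑ k ∈ Finset.range (N+1), c (-(k+1:ℤ)) * a k‖
      ≤ ∑ k ∈ Finset.range (N+1), f k * g k := habs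
    _ ≤ Real.sqrt (∑ k ∈ Finset.range (N+1), f k ^ 2) *
        Real.sqrt (∑ k ∈ Finset.range (N+1), g k ^ 2) := hCS'
    _ ≤ Real.sqrt (∑' k : ℕ, ‖c (-(k+1:ℤ))‖^2 / wk ω k) *
        Real.sqrt (∑ k ∈ Finset.range (N+1), ‖a k‖^2 * wk ω k) := by
        rw [hgS]
        exact mul_le_mul_of_nonneg_right (Real.sqrt_le_sqrt hT) (Real.sqrt_nonneg _)
    _ = (1 / Real.pi) *
        Real.sqrt (Real.pi * ∑' k : ℕ, ‖c (-(k+1:ℤ))‖^2 / wk ω k) *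
        Real.sqrt (Real.pi * ∑ k ∈ Finset.range (N+1), ‖a k‖^2 * wk ω k) := by
        rw [Real.sqrt_mul hπpos.le, Real.sqrt_mul hπpos.le]
        rw [show (1/Real.pi) * (Real.sqrt Real.pi *
              Real.sqrt (∑' k : ℕ, ‖c (-(k+1:ℤ))‖^2 / wk ω k)) *
            (Real.sqrt Real.pi *
              Real.sqrt (∑ k ∈ Finset.range (N+1), ‖a k‖^2 * wk ω k))
            = (Real.sqrt Real.pi * Real.sqrt Real.pi) * ((1/Real.pi) *
              (Real.sqrt (∑' k : ℕ, ‖c (-(k+1:ℤ))‖^2 / wk ω k) *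
               Real.sqrt (∑ k ∈ Finset.range (N+1), ‖a k‖^2 * wk ω k))) from by ring,
          Real.mul_self_sqrt hπpos.le]
        field_simp
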